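/- Let x* ∈ E satisfy ∇f x* = 0, and let y¹, y² : ℕ → E satisfy the explicit Euler recursion with step-size 1 for the ACCONEST flow, i.e. (y¹ (k+1), y² (k+1)) = (y¹ k, y² k) + F (y¹ k, y² k) for all k. Then there exists a constant C ≥ 0 (depending only on y¹ 0, y² 0, f, μ, L) such that for every k, f (y¹ k) − f x* ≤ C · (1 − 1/√κ)^k. -/

import Mathlib

open RealInnerProductSpace

section helpers

variable {n : ℕ}
local notation "E" => EuclideanSpace ℝ (Fin n)

lemma deriv_along (f : E → ℝ) (gf : E → E) (hgrad : ∀ x, HasGradientAt f (gf x) x)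
    (x v : E) (t : ℝ) :
    HasDerivAt (fun t : ℝ => f (x + t • v)) ⟪gf (x + t • v), v⟫ t := by
  have hc : HasDerivAt (fun t : ℝ => x + t • v) v t := by
    simpa using ((hasDerivAt_id t).smul_const v).const_add x
  have h := ((hgrad (x + t • v)).hasFDerivAt).comp_hasDerivAt t hc
  simpa [InnerProductSpace.toDual_apply_apply, Function.comp_def] using h

lemma integral_along (f : E → ℝ) (gf : E → E) (hgrad : ∀ x, HasGradientAt f (gf x) x)
    (hcont : Continuous gf) (x v : E) :
    ∫ t in (0:ℝ)..1, ⟪gf (x + t • v), v⟫ = f (x + v) - f x := by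
  have hct : Continuous fun t : ℝ => ⟪gf (x + t • v), v⟫ :=
    (hcont.comp (continuous_const.add (continuous_id.smul continuous_const))).inner
      continuous_const
  have h := intervalIntegral.integral_eq_sub_of_hasDerivAt
    (f := fun t : ℝ => f (x + t • v)) (fun t _ => deriv_along f gf hgrad x v t)
    (hct.intervalIntegrable 0 1)
  simpa using h

lemma aux_int (A c : ℝ) : ∫ t in (0:ℝ)..1, (A + c * t) = A + c / 2 := by
  rw [intervalIntegral.integral_add (intervalIntegrable_const)
    (Continuous.intervalIntegrable (by fun_prop) 0 1),
    intervalIntegral.integral_const, intervalIntegral.integral_const_mul, integral_id]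
  norm_num
  ring

lemma taylor_lower (μ : ℝ) (f : E → ℝ) (gf : E → E)
    (hgrad : ∀ x, HasGradientAt f (gf x) x) (hcont : Continuous gf)
    (hsc : ∀ x y : E, ⟪gf x - gf y, x - y⟫ ≥ μ * ‖x - y‖ ^ 2)
    (x y : E) : f x + ⟪gf x, y - x⟫ + μ / 2 * ‖y - x‖ ^ 2 ≤ f y := by
  set v := y - x with hv
  have hxy : x + v = y := by rw [hv]; abel
  have key : ∫ t in (0:ℝ)..1, (⟪gf x, v⟫ + μ * ‖v‖ ^ 2 * t)
      ≤ ∫ t in (0:ℝ)..1, ⟪gf (x + t • v), v⟫ := by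
    apply intervalIntegral.integral_mono_on (by norm_num)
    · exact Continuous.intervalIntegrable (by fun_prop) 0 1
    · exact ((hcont.comp (continuous_const.add (continuous_id.smul continuous_const))).inner
        continuous_const).intervalIntegrable 0 1
    · intro t ht
      rcases eq_or_lt_of_le ht.1 with h0 | h0
      · simp [← h0]
      · have h := hsc (x + t • v) x
        have h2 : x + t • v - x = t • v := by abel
        rw [h2, norm_smul] at h
        have h3 : ⟪gf (x + t • v) - gf x, t • v⟫
            = t * (⟪gf (x + t • v), v⟫ - ⟪gf x, v⟫) := by
          rw [inner_sub_left, real_inner_smul_right, real_inner_smul_right]; ring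
        rw [h3, Real.norm_eq_abs, abs_of_pos h0] at h
        nlinarith [h0]
  rw [integral_along f gf hgrad hcont x v, aux_int] at key
  have : μ * ‖v‖ ^ 2 / 2 = μ / 2 * ‖v‖ ^ 2 := by ring
  rw [hxy] at key
  linarith

lemma taylor_upper (L : ℝ) (hL : 0 < L) (f : E → ℝ) (gf : E → E)
    (hgrad : ∀ x, HasGradientAt f (gf x) x) (hcont : Continuous gf)
    (hsmooth : ∀ x y : E, ‖gf x - gf y‖ ≤ L * ‖x - y‖)
    (x y : E) : f y ≤ f x + ⟪gf x, y - x⟫ + L / 2 * ‖y - x‖ ^ 2 := by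
  set v := y - x with hv
  have hxy : x + v = y := by rw [hv]; abel
  have key : ∫ t in (0:ℝ)..1, ⟪gf (x + t • v), v⟫
      ≤ ∫ t in (0:ℝ)..1, (⟪gf x, v⟫ + L * ‖v‖ ^ 2 * t) := by
    apply intervalIntegral.integral_mono_on (by norm_num)
    · exact ((hcont.comp (continuous_const.add (continuous_id.smul continuous_const))).inner
        continuous_const).intervalIntegrable 0 1
    · exact Continuous.intervalIntegrable (by fun_prop) 0 1
    · intro t ht
      have h1 : ⟪gf (x + t • v) - gf x, v⟫ ≤ ‖gf (x + t • v) - gf x‖ * ‖v‖ :=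
        real_inner_le_norm _ _
      have h2 : ‖gf (x + t • v) - gf x‖ ≤ L * ‖t • v‖ := by
        have := hsmooth (x + t • v) x
        have h2' : x + t • v - x = t • v := by abel
        rwa [h2'] at this
      rw [norm_smul, Real.norm_eq_abs, abs_of_nonneg ht.1] at h2
      have h3 : ⟪gf (x + t • v) - gf x, v⟫
          = ⟪gf (x + t • v), v⟫ - ⟪gf x, v⟫ := by rw [inner_sub_left]
      nlinarith [norm_nonneg v, ht.1]
  rw [integral_along f gf hgrad hcont x v, aux_int, hxy] at key
  linarith


end helpers

/-- The ACCONEST vector field. -/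
noncomputable def accF {n : ℕ} (L β : ℝ)
    (gf : EuclideanSpace ℝ (Fin n) → EuclideanSpace ℝ (Fin n))
    (z : EuclideanSpace ℝ (Fin n) × EuclideanSpace ℝ (Fin n)) :
    EuclideanSpace ℝ (Fin n) × EuclideanSpace ℝ (Fin n) :=
  (z.2 - z.1 - (1 / L) • gf z.2, β • (z.2 - z.1) - ((1 + β) / L) • gf z.2)

set_option maxHeartbeats 1000000 in
theorem stmt_15 {n : ℕ} (μ L κ β : ℝ)
    (hμ : 0 < μ) (hμL : μ ≤ L)
    (hκ : κ = L / μ) (hβ : β = (Real.sqrt κ - 1) / (Real.sqrt κ + 1))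
    (f : EuclideanSpace ℝ (Fin n) → ℝ)
    (gf : EuclideanSpace ℝ (Fin n) → EuclideanSpace ℝ (Fin n))
    (hgrad : ∀ x, HasGradientAt f (gf x) x)
    (hsmooth : ∀ x y, ‖gf x - gf y‖ ≤ L * ‖x - y‖)
    (hsc : ∀ x y : EuclideanSpace ℝ (Fin n), ⟪gf x - gf y, x - y⟫ ≥ μ * ‖x - y‖ ^ 2)
    (xs : EuclideanSpace ℝ (Fin n)) (hxs : gf xs = 0)
    (y1 y2 : ℕ → EuclideanSpace ℝ (Fin n))
    (hy : ∀ k : ℕ, (y1 (k + 1), y2 (k + 1)) = (y1 k, y2 k) + accF L β gf (y1 k, y2 k)) :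
    ∃ C : ℝ, 0 ≤ C ∧
      ∀ k : ℕ, f (y1 k) - f xs ≤ C * (1 - 1 / Real.sqrt κ) ^ k := by
  have hL : 0 < L := lt_of_lt_of_le hμ hμL
  have hcont : Continuous gf := by
    have hlip : LipschitzWith ⟨L, hL.le⟩ gf :=
      LipschitzWith.of_dist_le_mul fun x y => by
        rw [dist_eq_norm, dist_eq_norm]; exact hsmooth x y
    exact hlip.continuous
  have hκ1 : 1 ≤ κ := by rw [hκ]; exact (one_le_div hμ).mpr hμL
  set s := Real.sqrt κ with hsdef
  have hs1 : 1 ≤ s := by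
    have := Real.sqrt_le_sqrt hκ1
    simpa [hsdef] using this
  have hs0 : 0 < s := by linarith
  have hs0' : s ≠ 0 := hs0.ne'
  have hsp1 : s + 1 ≠ 0 := by positivity
  have hμ0 : μ ≠ 0 := hμ.ne'
  have hsκ : s ^ 2 = κ := Real.sq_sqrt (by linarith)
  have hLμ : L = μ * s ^ 2 := by rw [hsκ, hκ]; field_simp
  have hq1 : 1 / s ≤ 1 := by rw [div_le_one hs0]; linarith
  have hq0 : 0 < 1 / s := by positivity
  set z : ℕ → EuclideanSpace ℝ (Fin n) := fun k => (1 + s) • y2 k - s • y1 k with hzdef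
  set V : ℕ → ℝ := fun k => f (y1 k) - f xs + μ / 2 * ‖z k - xs‖ ^ 2 with hVdef
  have hflow : ∀ x, f xs ≤ f x := fun x => by
    have h := taylor_lower μ f gf hgrad hcont hsc xs x
    rw [hxs] at h
    simp only [inner_zero_left] at h
    nlinarith [sq_nonneg ‖x - xs‖]
  have hstep : ∀ k, V (k + 1) ≤ (1 - 1 / s) * V k := by
    intro k
    have h := hy k
    rw [Prod.ext_iff] at h
    obtain ⟨h1, h2⟩ := h
    simp only [accF, Prod.fst_add, Prod.snd_add] at h1 h2
    set g := gf (y2 k) with hg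
    set r := z k - xs with hr
    set d := y2 k - xs with hd
    set w := (1 - 1 / s) • r + (1 / s) • d with hw
    have hz : z (k + 1) - xs = w - (1 / (s * μ)) • g := by
      simp only [hw, hr, hd, hzdef, h1, h2, hβ, hLμ]
      match_scalars <;> field_simp <;> ring
    have hnorm : ‖w - (1 / (s * μ)) • g‖ ^ 2
        = ‖w‖ ^ 2 - 2 * (1 / (s * μ)) * ⟪w, g⟫ + (1 / (s * μ)) ^ 2 * ‖g‖ ^ 2 := by
      rw [norm_sub_sq_real, real_inner_smul_right, norm_smul, Real.norm_eq_abs,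
        abs_of_pos (by positivity)]
      ring
    have hwexp : ‖w‖ ^ 2 = (1 - 1 / s) ^ 2 * ‖r‖ ^ 2
        + 2 * (1 - 1 / s) * (1 / s) * ⟪r, d⟫ + (1 / s) ^ 2 * ‖d‖ ^ 2 := by
      rw [hw, norm_add_sq_real, real_inner_smul_left, real_inner_smul_right,
        norm_smul, norm_smul, Real.norm_eq_abs, Real.norm_eq_abs,
        abs_of_nonneg (by linarith), abs_of_pos hq0]
      ring
    have hwle : ‖w‖ ^ 2 ≤ (1 - 1 / s) * ‖r‖ ^ 2 + (1 / s) * ‖d‖ ^ 2 := by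
      have hrd : ⟪r, d⟫ ≤ ‖r‖ * ‖d‖ := real_inner_le_norm r d
      have hq1' : (0:ℝ) ≤ 1 - 1 / s := by linarith
      have k1 : 0 ≤ (1 / s) * (1 - 1 / s) * (‖r‖ - ‖d‖) ^ 2 :=
        mul_nonneg (mul_nonneg hq0.le hq1') (sq_nonneg _)
      have k2 : 0 ≤ (1 / s) * (1 - 1 / s) * (‖r‖ * ‖d‖ - ⟪r, d⟫) :=
        mul_nonneg (mul_nonneg hq0.le hq1') (by linarith)
      rw [hwexp]; linarith [k1, k2]
    have hwg : ⟪w, g⟫ = (1 - 1 / s) * ⟪r, g⟫ + (1 / s) * ⟪d, g⟫ := by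
      rw [hw, inner_add_left, real_inner_smul_left, real_inner_smul_left]
    have hrg : ⟪r, g⟫ = s * ⟪y2 k - y1 k, g⟫ + ⟪d, g⟫ := by
      have e : r = s • (y2 k - y1 k) + d := by
        rw [hr, hd, hzdef]; module
      rw [e, inner_add_left, real_inner_smul_left]
    have hsub : μ / 2 * (2 * (1 / (s * μ)) * ⟪w, g⟫)
        = (1 - 1 / s) * ⟪y2 k - y1 k, g⟫ + (1 / s) * ⟪d, g⟫ := by
      rw [hwg, hrg]; field_simp; ring
    have hsub2 : μ / 2 * ((1 / (s * μ)) ^ 2 * ‖g‖ ^ 2) = 1 / (2 * L) * ‖g‖ ^ 2 := by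
      rw [hLμ]; field_simp
    have hdesc : f (y1 (k + 1)) ≤ f (y2 k) - 1 / (2 * L) * ‖g‖ ^ 2 := by
      have h := taylor_upper L hL f gf hgrad hcont hsmooth (y2 k) (y1 (k + 1))
      have hd2 : y1 (k + 1) - y2 k = -((1 / L) • g) := by rw [h1]; module
      have e1 : ⟪g, -((1 / L) • g)⟫ = -(1 / L * ‖g‖ ^ 2) := by
        rw [inner_neg_right, real_inner_smul_right, real_inner_self_eq_norm_sq]
      have e2 : ‖-((1 / L) • g)‖ ^ 2 = (1 / L) ^ 2 * ‖g‖ ^ 2 := by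
        rw [norm_neg, norm_smul, Real.norm_eq_abs, abs_of_pos (by positivity)]; ring
      rw [hd2, e1, e2] at h
      have e3 : L / 2 * ((1 / L) ^ 2 * ‖g‖ ^ 2) = 1 / (2 * L) * ‖g‖ ^ 2 := by
        field_simp
      have e4 : 1 / L * ‖g‖ ^ 2 = 2 * (1 / (2 * L) * ‖g‖ ^ 2) := by field_simp
      linarith
    have hsc1 : f (y2 k) - ⟪d, g⟫ + μ / 2 * ‖d‖ ^ 2 ≤ f xs := by
      have h := taylor_lower μ f gf hgrad hcont hsc (y2 k) xs
      have e1 : ⟪g, xs - y2 k⟫ = -⟪d, g⟫ := by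
        rw [show xs - y2 k = -d by rw [hd]; abel, inner_neg_right, real_inner_comm]
      have e2 : ‖xs - y2 k‖ = ‖d‖ := by rw [hd]; exact norm_sub_rev _ _
      rw [← hg, e1, e2] at h
      linarith
    have hsc2 : f (y2 k) - ⟪y2 k - y1 k, g⟫ ≤ f (y1 k) := by
      have h := taylor_lower μ f gf hgrad hcont hsc (y2 k) (y1 k)
      have e1 : ⟪g, y1 k - y2 k⟫ = -⟪y2 k - y1 k, g⟫ := by
        rw [show y1 k - y2 k = -(y2 k - y1 k) by abel, inner_neg_right, real_inner_comm]
      rw [← hg, e1] at h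
      have : (0:ℝ) ≤ μ / 2 * ‖y1 k - y2 k‖ ^ 2 := by positivity
      linarith
    have I2 : μ / 2 * ‖w‖ ^ 2 ≤ μ / 2 * ((1 - 1 / s) * ‖r‖ ^ 2 + (1 / s) * ‖d‖ ^ 2) :=
      mul_le_mul_of_nonneg_left hwle (by positivity)
    have I3 : (1 - 1 / s) * (f (y2 k) - ⟪y2 k - y1 k, g⟫) ≤ (1 - 1 / s) * f (y1 k) :=
      mul_le_mul_of_nonneg_left hsc2 (by linarith)
    have I4 : (1 / s) * (f (y2 k) - ⟪d, g⟫ + μ / 2 * ‖d‖ ^ 2) ≤ (1 / s) * f xs :=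
      mul_le_mul_of_nonneg_left hsc1 hq0.le
    show f (y1 (k + 1)) - f xs + μ / 2 * ‖z (k + 1) - xs‖ ^ 2
        ≤ (1 - 1 / s) * (f (y1 k) - f xs + μ / 2 * ‖r‖ ^ 2)
    rw [hz, hnorm]
    nlinarith [hdesc, I2, I3, I4, hsub, hsub2]
  have hV0 : 0 ≤ V 0 := by
    have h1 := hflow (y1 0)
    have h2 : (0:ℝ) ≤ μ / 2 * ‖z 0 - xs‖ ^ 2 := by positivity
    simp only [hVdef]
    linarith
  refine ⟨V 0, hV0, fun k => ?_⟩
  have hiter : ∀ k, V k ≤ (1 - 1 / s) ^ k * V 0 := by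
    intro k
    induction k with
    | zero => simp
    | succ k ih =>
      calc V (k + 1) ≤ (1 - 1 / s) * V k := hstep k
        _ ≤ (1 - 1 / s) * ((1 - 1 / s) ^ k * V 0) :=
            mul_le_mul_of_nonneg_left ih (by linarith)
        _ = (1 - 1 / s) ^ (k + 1) * V 0 := by ring
  have hVk : f (y1 k) - f xs ≤ V k := by
    have : (0:ℝ) ≤ μ / 2 * ‖z k - xs‖ ^ 2 := by positivity
    simp only [hVdef]
    linarith
  calc f (y1 k) - f xs ≤ V k := hVk
    _ ≤ (1 - 1 / s) ^ k * V 0 := hiter k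
    _ = V 0 * (1 - 1 / s) ^ k := mul_comm _ _
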